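/- arXiv:1404.6920 — 4 statements merged into one kernel-verified Lean document; each statement's English description precedes it below -/
import Mathlib

section
/- Define S(δ) = sup{ h(x,d) : x ∈ E, 0 < d ≤ δ } for δ > 0. Then for any two numbers a, b ∈ (0, c/r_min], one has S(a) = S(b). -/
open Metric Set MeasureTheory Filter Topology
open scoped ENNReal NNReal

noncomputable section

/-- `P^s_δ(A)`: the supremum of `∑ᵢ |Bᵢ|^s` over all `δ`-packings of `A`, i.e. countable
collections of pairwise disjoint closed balls centered at points of `A` with diameters `≤ δ`.
(Finite packings are represented by padding with empty balls of negative radius, which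
contribute `0` to the sum.) -/
def packPre {X : Type*} [PseudoMetricSpace X] (s δ : ℝ) (A : Set X) : ℝ≥0∞ :=
  ⨆ (cen : ℕ → X) (rad : ℕ → ℝ) (_ : ∀ i, cen i ∈ A)
    (_ : ∀ i, Metric.diam (Metric.closedBall (cen i) (rad i)) ≤ δ)
    (_ : Pairwise fun i j =>
      Disjoint (Metric.closedBall (cen i) (rad i)) (Metric.closedBall (cen j) (rad j))),
    ∑' i, ENNReal.ofReal (Metric.diam (Metric.closedBall (cen i) (rad i)) ^ s)

/-- The packing premeasure `P₀^s(A) = lim_{δ→0} P^s_δ(A)`; since `δ ↦ P^s_δ(A)` is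
nondecreasing, the limit is the infimum over `δ > 0`. -/
def packPre0 {X : Type*} [PseudoMetricSpace X] (s : ℝ) (A : Set X) : ℝ≥0∞ :=
  ⨅ (δ : ℝ) (_ : 0 < δ), packPre s δ A

/-- The packing measure `P^s(A) = inf { ∑ᵢ P₀^s(Uᵢ) : A ⊆ ⋃ᵢ Uᵢ }`. -/
def packM {X : Type*} [PseudoMetricSpace X] (s : ℝ) (A : Set X) : ℝ≥0∞ :=
  ⨅ (U : ℕ → Set X) (_ : A ⊆ ⋃ i, U i), ∑' i, packPre0 s (U i)

/-- The density function `h(x,d) = (2d)^s / μ(B(x,d))` (closed ball). -/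
def densityh {X : Type*} [PseudoMetricSpace X] [MeasurableSpace X]
    (μ : MeasureTheory.Measure X) (s : ℝ) (x : X) (d : ℝ) : ℝ≥0∞ :=
  ENNReal.ofReal ((2 * d) ^ s) / μ (Metric.closedBall x d)

/-- The discrete density function `h_k(x,d) = (2d)^s / μ_k(B'(x,d))` (open ball). -/
def densityhk {X : Type*} [PseudoMetricSpace X] [MeasurableSpace X]
    (μ : MeasureTheory.Measure X) (s : ℝ) (x : X) (d : ℝ) : ℝ≥0∞ :=
  ENNReal.ofReal ((2 * d) ^ s) / μ (Metric.ball x d)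

/-- `fWord f σ k = f_{σ 0} ∘ ⋯ ∘ f_{σ (k-1)}`: the composition of the maps along the
first `k` letters of the code `σ` (so `fWord f σ k '' E` is the cylinder set `E_{σ(k)}`). -/
def fWord {X : Type*} {N : ℕ} (f : Fin N → X → X) (σ : ℕ → Fin N) : ℕ → X → X
  | 0 => id
  | (k+1) => fWord f σ k ∘ f (σ k)

/-- `rWord rr σ k = r_{σ 0} ⋯ r_{σ (k-1)}`: the contraction ratio of `fWord f σ k`. -/
def rWord {N : ℕ} (rr : Fin N → ℝ) (σ : ℕ → Fin N) (k : ℕ) : ℝ :=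
  ∏ j ∈ Finset.range k, rr (σ j)

/-- The algorithm's point sets: `algA f 1` is the set of fixed points of the maps `fᵢ`,
and `algA f (k+1) = ⋃ i, fᵢ(algA f k)`; `algA f 0` is unused (empty). -/
def algA {X : Type*} {N : ℕ} (f : Fin N → X → X) : ℕ → Set X
  | 0 => ∅
  | 1 => {x | ∃ i, f i x = x}
  | (k+2) => ⋃ i, f i '' algA f (k+1)

/-- Composition of the maps `fᵢ` along a finite word `w`. -/
def wordComp {X : Type*} {N : ℕ} (f : Fin N → X → X) : ∀ k, (Fin k → Fin N) → X → X
  | 0, _ => id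
  | (k+1), w => f (w 0) ∘ wordComp f k (w ∘ Fin.succ)

/-- The discrete measures `μ_k = ∑_{x ∈ A_k} r_{i_k(x)}^s · δ_x`: the sum runs over all
words `w` of length `k`, with weight `r_w^s` and Dirac mass at the point of `A_k` with
address `w`, namely `f_w(fix(last letter of w))`; `algMu … 0` is unused (zero measure). -/
def algMu {X : Type*} [MeasurableSpace X] {N : ℕ} (f : Fin N → X → X)
    (rr : Fin N → ℝ) (fix : Fin N → X) (s : ℝ) : ℕ → MeasureTheory.Measure X
  | 0 => 0
  | (k+1) => ∑ w : Fin (k+1) → Fin N,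
      ENNReal.ofReal ((∏ j, rr (w j)) ^ s) •
        MeasureTheory.Measure.dirac (wordComp f (k+1) w (fix (w (Fin.last k))))

/-- The algorithm's admissible set of radii
`D_k = {dist(x,y) : x, y ∈ A_k} ∩ [c̃, c̃/r_min]`. -/
def algD {X : Type*} [PseudoMetricSpace X] {N : ℕ} (f : Fin N → X → X)
    (ct rmin : ℝ) (k : ℕ) : Set ℝ :=
  {d | (∃ x ∈ algA f k, ∃ y ∈ algA f k, d = dist x y) ∧ ct ≤ d ∧ d ≤ ct / rmin}

end

theorem sup_density_independent_of_bound
{n N : ℕ} (hN : 2 ≤ N)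
    (f : Fin N → EuclideanSpace ℝ (Fin n) → EuclideanSpace ℝ (Fin n))
    (rr : Fin N → ℝ) (hr : ∀ i, 0 < rr i ∧ rr i < 1)
    (hsim : ∀ i x y, dist (f i x) (f i y) = rr i * dist x y)
    (E : Set (EuclideanSpace ℝ (Fin n))) (hEne : E.Nonempty) (hEcp : IsCompact E)
    (hEinv : E = ⋃ i, f i '' E)
    (hssc : ∀ i j, i ≠ j → Disjoint (f i '' E) (f j '' E))
(hEdiam : Metric.diam E = 1)
(rmin : ℝ) (hrmin : IsLeast (Set.range rr) rmin)
(c : ℝ) (hc : 0 < c)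
    (hcdef : c = sInf {d : ℝ | ∃ i j : Fin N, i ≠ j ∧
      ∃ u ∈ f i '' E, ∃ v ∈ f j '' E, d = dist u v})
(s : ℝ) (hs : 0 < s) (hsum : ∑ i, rr i ^ s = 1)
    (μ : MeasureTheory.Measure (EuclideanSpace ℝ (Fin n))) (hμ : IsProbabilityMeasure μ)
    (hμss : ∀ A : Set (EuclideanSpace ℝ (Fin n)), MeasurableSet A →
      μ A = ∑ i, ENNReal.ofReal (rr i ^ s) * μ (f i ⁻¹' A))
    (a b : ℝ) (ha : 0 < a) (ha' : a ≤ c / rmin) (hb : 0 < b) (hb' : b ≤ c / rmin) :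
    sSup {v : ℝ≥0∞ | ∃ x ∈ E, ∃ d : ℝ, 0 < d ∧ d ≤ a ∧ v = densityh μ s x d} =
      sSup {v : ℝ≥0∞ | ∃ x ∈ E, ∃ d : ℝ, 0 < d ∧ d ≤ b ∧ v = densityh μ s x d} := by
  classical
  obtain ⟨⟨i₀, hi₀⟩, hlb'⟩ := hrmin
  have hlb : ∀ i, rmin ≤ rr i := fun i => hlb' ⟨i, rfl⟩
  have hrmin0 : 0 < rmin := hi₀ ▸ (hr i₀).1
  have hrmin1 : rmin < 1 := hi₀ ▸ (hr i₀).2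
  have hNpos : 0 < N := by omega
  haveI : Nonempty (Fin N) := ⟨⟨0, hNpos⟩⟩
  -- lower bound on distances between different pieces
  have hc_le : ∀ (i j : Fin N), i ≠ j → ∀ u ∈ f i '' E, ∀ v ∈ f j '' E, c ≤ dist u v := by
    intro i j hij u hu v hv
    rw [hcdef]
    refine csInf_le ⟨0, ?_⟩ ⟨i, j, hij, u, hu, v, hv, rfl⟩
    rintro d ⟨i', j', -, u', -, v', -, rfl⟩
    exact dist_nonneg
  have hfsub : ∀ i, f i '' E ⊆ E := by
    intro i
    conv_rhs => rw [hEinv]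
    exact Set.subset_iUnion (fun i => f i '' E) i
  have himg : ∀ x ∈ E, ∀ i, f i x ∈ E := fun x hx i => hfsub i ⟨x, hx, rfl⟩
  -- the maximal ratio
  obtain ⟨im, him⟩ : ∃ im : Fin N, ∀ j, rr j ≤ rr im := Finite.exists_max rr
  have him0 : 0 < rr im := (hr im).1
  have him1 : rr im < 1 := (hr im).2
  -- μ is supported on E
  set U : ℝ → Set (EuclideanSpace ℝ (Fin n)) := fun t => {y | t ≤ infDist y E} with hU
  have hUclosed : ∀ t, IsClosed (U t) :=
    fun t => isClosed_le continuous_const (continuous_infDist_pt E)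
  have hUmono : ∀ ⦃t t' : ℝ⦄, t ≤ t' → U t' ⊆ U t := by
    intro t t' h y hy
    exact le_trans h hy
  have hsum1 : (∑ i, ENNReal.ofReal (rr i ^ s)) = 1 := by
    rw [← ENNReal.ofReal_sum_of_nonneg (fun i _ => Real.rpow_nonneg (hr i).1.le s), hsum,
      ENNReal.ofReal_one]
  have hUstep : ∀ t : ℝ, 0 < t → μ (U t) ≤ μ (U (t / rr im)) := by
    intro t ht
    rw [hμss (U t) (hUclosed t).measurableSet]
    have hsub : ∀ i, f i ⁻¹' U t ⊆ U (t / rr im) := by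
      intro i y hy
      obtain ⟨e, he, hee⟩ := hEcp.exists_infDist_eq_dist hEne y
      have h1 : infDist (f i y) E ≤ rr i * infDist y E := by
        calc infDist (f i y) E ≤ dist (f i y) (f i e) :=
              infDist_le_dist_of_mem (hfsub i ⟨e, he, rfl⟩)
          _ = rr i * dist y e := hsim i y e
          _ = rr i * infDist y E := by rw [hee]
      have h2 : t ≤ rr i * infDist y E := le_trans hy h1
      have h3 : t / rr i ≤ infDist y E := by
        rw [div_le_iff₀ (hr i).1]
        linarith [h2, mul_comm (rr i) (infDist y E)]
      have h4 : t / rr im ≤ t / rr i :=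
        div_le_div_of_nonneg_left ht.le (hr i).1 (him i)
      exact le_trans h4 h3
    calc (∑ i, ENNReal.ofReal (rr i ^ s) * μ (f i ⁻¹' U t))
        ≤ ∑ i, ENNReal.ofReal (rr i ^ s) * μ (U (t / rr im)) := by
          refine Finset.sum_le_sum fun i _ => ?_
          exact mul_le_mul_right (measure_mono (hsub i)) _
      _ = (∑ i, ENNReal.ofReal (rr i ^ s)) * μ (U (t / rr im)) := by
          rw [Finset.sum_mul]
      _ = μ (U (t / rr im)) := by rw [hsum1, one_mul]
  have hUiter : ∀ k : ℕ, ∀ t : ℝ, 0 < t → μ (U t) ≤ μ (U (t / rr im ^ k)) := by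
    intro k
    induction k with
    | zero => intro t ht; simp
    | succ k ih =>
      intro t ht
      have h1 := hUstep t ht
      have h2 := ih (t / rr im) (div_pos ht him0)
      have h3 : t / rr im / rr im ^ k = t / rr im ^ (k + 1) := by
        rw [div_div, ← pow_succ']
      rw [h3] at h2
      exact le_trans h1 h2
  have hUnull : ∀ t : ℝ, 0 < t → μ (U t) = 0 := by
    intro t ht
    have hanti : Antitone (fun m : ℕ => U (m : ℝ)) := by
      intro p q hpq
      exact hUmono (by exact_mod_cast hpq)
    have hempty : (⋂ m : ℕ, U (m : ℝ)) = ∅ := by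
      ext y
      simp only [Set.mem_iInter, Set.mem_empty_iff_false, iff_false, not_forall]
      obtain ⟨m, hm⟩ := exists_nat_gt (infDist y E)
      exact ⟨m, not_le.mpr hm⟩
    have htend : Tendsto (fun m : ℕ => μ (U (m : ℝ))) atTop (𝓝 0) := by
      have := tendsto_measure_iInter_atTop
        (fun m : ℕ => (hUclosed (m : ℝ)).measurableSet.nullMeasurableSet)
        hanti ⟨0, measure_ne_top μ _⟩
      rw [hempty] at this
      simpa [Function.comp_def] using this
    have hbound : ∀ m : ℕ, μ (U t) ≤ μ (U (m : ℝ)) := by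
      intro m
      obtain ⟨k, hk⟩ := exists_pow_lt_of_lt_one (div_pos ht (by positivity : (0:ℝ) < m + 1)) him1
      have hk' : (m : ℝ) ≤ t / rr im ^ k := by
        have hkpos : (0:ℝ) < rr im ^ k := pow_pos him0 k
        have hk2 : rr im ^ k * ((m : ℝ) + 1) < t :=
          (lt_div_iff₀ (by positivity : (0:ℝ) < (m:ℝ) + 1)).mp hk
        rw [le_div_iff₀ hkpos]
        nlinarith [hk2, hkpos]
      exact le_trans (hUiter k t ht) (measure_mono (hUmono hk'))
    have := ge_of_tendsto' htend hbound
    exact le_antisymm this (zero_le)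
  have hEc : μ Eᶜ = 0 := by
    refine measure_mono_null ?_ (measure_iUnion_null fun m : ℕ => hUnull (1 / (m + 1)) (by positivity))
    intro y hy
    have hpos : 0 < infDist y E :=
      (hEcp.isClosed.notMem_iff_infDist_pos hEne).mp hy
    obtain ⟨m, hm⟩ := exists_nat_one_div_lt hpos
    exact Set.mem_iUnion.mpr ⟨m, hm.le⟩
  -- scaling step
  have hstep2 : ∀ x ∈ E, ∀ d : ℝ, 0 < d → rmin * d < c →
      densityh μ s (f i₀ x) (rmin * d) = densityh μ s x d := by
    intro x hx d hd hdc
    have hpre : f i₀ ⁻¹' closedBall (f i₀ x) (rmin * d) = closedBall x d := by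
      ext y
      simp only [Set.mem_preimage, mem_closedBall, hsim, hi₀]
      exact mul_le_mul_iff_right₀ hrmin0
    have hzero : ∀ j, j ≠ i₀ → μ (f j ⁻¹' closedBall (f i₀ x) (rmin * d)) = 0 := by
      intro j hj
      refine measure_mono_null ?_ hEc
      intro y hy
      simp only [Set.mem_compl_iff]
      intro hyE
      have h1 : c ≤ dist (f j y) (f i₀ x) := hc_le j i₀ hj _ ⟨y, hyE, rfl⟩ _ ⟨x, hx, rfl⟩
      have h2 : dist (f j y) (f i₀ x) ≤ rmin * d := hy
      linarith
    have hball := hμss (closedBall (f i₀ x) (rmin * d)) measurableSet_closedBall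
    rw [Finset.sum_eq_single i₀ (fun j _ hj => by rw [hzero j hj, mul_zero])
      (fun h => absurd (Finset.mem_univ i₀) h), hpre, hi₀] at hball
    unfold densityh
    rw [hball]
    have h2d : (2 * (rmin * d)) = (2 * d) * rmin := by ring
    rw [h2d, Real.mul_rpow (by positivity) hrmin0.le, ENNReal.ofReal_mul (by positivity),
      mul_comm (ENNReal.ofReal (rmin ^ s)) (μ (closedBall x d))]
    exact ENNReal.mul_div_mul_right _ _
      (ne_of_gt (ENNReal.ofReal_pos.mpr (Real.rpow_pos_of_pos hrmin0 s)))
      ENNReal.ofReal_ne_top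
  have hcc : c < c / rmin := by
    rw [lt_div_iff₀ hrmin0]
    nlinarith
  -- key lemma
  have key : ∀ e : ℝ, 0 < e → ∀ x ∈ E, ∀ d : ℝ, 0 < d → d ≤ c / rmin →
      densityh μ s x d ≤
        sSup {v : ℝ≥0∞ | ∃ x ∈ E, ∃ d : ℝ, 0 < d ∧ d ≤ e ∧ v = densityh μ s x d} := by
    intro e he
    have desc : ∀ k : ℕ, ∀ x ∈ E, ∀ d : ℝ, 0 < d → d < c / rmin → rmin ^ k * d ≤ e →
        densityh μ s x d ≤
          sSup {v : ℝ≥0∞ | ∃ x ∈ E, ∃ d : ℝ, 0 < d ∧ d ≤ e ∧ v = densityh μ s x d} := by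
      intro k
      induction k with
      | zero =>
        intro x hx d hd hdc hde
        exact le_sSup ⟨x, hx, d, hd, by simpa using hde, rfl⟩
      | succ k ih =>
        intro x hx d hd hdc hde
        have h1 : rmin * d < c := by
          have h2 : rmin * d < rmin * (c / rmin) := (mul_lt_mul_iff_right₀ hrmin0).mpr hdc
          have h3 : rmin * (c / rmin) = c := by field_simp
          linarith
        rw [← hstep2 x hx d hd h1]
        exact ih (f i₀ x) (himg x hx i₀) (rmin * d) (by positivity) (h1.trans hcc)
          (by rw [show rmin ^ k * (rmin * d) = rmin ^ (k + 1) * d by ring]; exact hde)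
    have main1 : ∀ x ∈ E, ∀ d : ℝ, 0 < d → d < c / rmin →
        densityh μ s x d ≤
          sSup {v : ℝ≥0∞ | ∃ x ∈ E, ∃ d : ℝ, 0 < d ∧ d ≤ e ∧ v = densityh μ s x d} := by
      intro x hx d hd hdc
      obtain ⟨k, hk⟩ := exists_pow_lt_of_lt_one (div_pos he hd) hrmin1
      refine desc k x hx d hd hdc (le_of_lt ?_)
      calc rmin ^ k * d < (e / d) * d := mul_lt_mul_of_pos_right hk hd
        _ = e := div_mul_cancel₀ e hd.ne'
    intro x hx d hd hdc
    rcases lt_or_eq_of_le hdc with h | h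
    · exact main1 x hx d hd h
    · -- boundary case d = c / rmin: approximate from below
      set t : ℕ → ℝ := fun k => d - d / (k + 2) with ht
      have hk2 : ∀ k : ℕ, (1 : ℝ) < (k : ℝ) + 2 := by
        intro k
        have : (0:ℝ) ≤ (k : ℝ) := Nat.cast_nonneg k
        linarith
      have ht_pos : ∀ k, 0 < t k := by
        intro k
        have : d / ((k : ℝ) + 2) < d := div_lt_self hd (hk2 k)
        simpa [ht] using sub_pos.mpr this
      have ht_lt : ∀ k, t k < d := by
        intro k
        have : (0:ℝ) < d / ((k : ℝ) + 2) := by positivity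
        simpa [ht] using sub_lt_self d this
      have ht_mono : Monotone t := by
        intro p q hpq
        have h1 : d / ((q : ℝ) + 2) ≤ d / ((p : ℝ) + 2) := by
          refine div_le_div_of_nonneg_left hd.le (by positivity) ?_
          have : (p : ℝ) ≤ (q : ℝ) := by exact_mod_cast hpq
          linarith
        simp only [ht]
        linarith
      have ht_tend : Tendsto t atTop (𝓝 d) := by
        have h1 : Tendsto (fun k : ℕ => d / ((k : ℝ) + 2)) atTop (𝓝 0) := by
          apply Tendsto.div_atTop tendsto_const_nhds
          exact tendsto_atTop_add_const_right _ 2 tendsto_natCast_atTop_atTop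
        have := tendsto_const_nhds.sub h1 (α := ℕ) (f := fun _ : ℕ => d)
        simpa [ht] using this
      have hnum_tend : Tendsto (fun k => ENNReal.ofReal ((2 * t k) ^ s)) atTop
          (𝓝 (ENNReal.ofReal ((2 * d) ^ s))) := by
        refine (ENNReal.continuous_ofReal.continuousAt).tendsto.comp ?_
        refine ((Real.continuousAt_rpow_const (2 * d) s (Or.inl (ne_of_gt (by linarith : (0:ℝ) < 2 * d)))).tendsto).comp ?_
        exact (tendsto_const_nhds.mul ht_tend)
      have hnum_mono : Monotone fun k => ENNReal.ofReal ((2 * t k) ^ s) := by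
        intro p q hpq
        apply ENNReal.ofReal_le_ofReal
        apply Real.rpow_le_rpow (by nlinarith [ht_pos p]) ?_ hs.le
        have := ht_mono hpq
        linarith
      have hnum_sup : (⨆ k, ENNReal.ofReal ((2 * t k) ^ s)) = ENNReal.ofReal ((2 * d) ^ s) :=
        tendsto_nhds_unique (tendsto_atTop_iSup hnum_mono) hnum_tend
      calc densityh μ s x d
          ≤ ENNReal.ofReal ((2 * d) ^ s) / μ (ball x d) :=
            ENNReal.div_le_div_left (measure_mono ball_subset_closedBall) _
        _ = ⨆ k, ENNReal.ofReal ((2 * t k) ^ s) / μ (ball x d) := by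
            rw [← hnum_sup, ENNReal.iSup_div]
        _ ≤ sSup {v : ℝ≥0∞ | ∃ x ∈ E, ∃ d : ℝ, 0 < d ∧ d ≤ e ∧ v = densityh μ s x d} := by
            refine iSup_le fun k => ?_
            calc ENNReal.ofReal ((2 * t k) ^ s) / μ (ball x d)
                ≤ ENNReal.ofReal ((2 * t k) ^ s) / μ (closedBall x (t k)) :=
                  ENNReal.div_le_div_left
                    (measure_mono (closedBall_subset_ball (ht_lt k))) _
              _ = densityh μ s x (t k) := rfl
              _ ≤ _ := main1 x hx (t k) (ht_pos k) (by rw [← h]; exact ht_lt k)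
  apply le_antisymm
  · refine sSup_le ?_
    rintro v ⟨x, hx, d, hd, hda, rfl⟩
    exact key b hb x hx d hd (hda.trans ha')
  · refine sSup_le ?_
    rintro v ⟨x, hx, d, hd, hdb, rfl⟩
    exact key a ha x hx d hd (hdb.trans hb')
end

section
/- Let r and t be real numbers with 0 < r ≤ 1/3 and 0 < t ≤ 1/3, and let s ∈ (0, 1]. Then (1 + t/(1−r))^s ≤ 1 + 2·t^s. -/
open Metric Set MeasureTheory Filter Topology
open scoped ENNReal NNReal

lemma real_rpow_add_le_add_rpow {a b p : ℝ} (ha : 0 ≤ a) (hb : 0 ≤ b)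
    (hp : 0 ≤ p) (hp1 : p ≤ 1) : (a + b) ^ p ≤ a ^ p + b ^ p := by
  have h := NNReal.rpow_add_le_add_rpow a.toNNReal b.toNNReal hp hp1
  have := NNReal.coe_le_coe.2 h
  simpa [NNReal.coe_rpow, Real.coe_toNNReal _ ha, Real.coe_toNNReal _ hb,
    Real.coe_toNNReal _ (add_nonneg ha hb)] using this

theorem key_rpow_inequality (r t s : ℝ)
    (hr0 : 0 < r) (hr : r ≤ 1/3) (ht0 : 0 < t) (ht : t ≤ 1/3)
    (hs0 : 0 < s) (hs1 : s ≤ 1) :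
    (1 + t / (1 - r)) ^ s ≤ 1 + 2 * t ^ s := by
  have h1r : (0:ℝ) < 1 - r := by linarith
  have hu0 : 0 ≤ t / (1 - r) := le_of_lt (div_pos ht0 h1r)
  have h1 : (1 + t / (1 - r)) ^ s ≤ 1 ^ s + (t / (1 - r)) ^ s :=
    real_rpow_add_le_add_rpow zero_le_one hu0 hs0.le hs1
  rw [Real.one_rpow] at h1
  have hle : t / (1 - r) ≤ 3/2 * t := by
    rw [div_le_iff₀ h1r]; nlinarith
  have h2 : (t / (1 - r)) ^ s ≤ (3/2 * t) ^ s :=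
    Real.rpow_le_rpow hu0 hle hs0.le
  have h3 : (3/2 * t) ^ s = (3/2 : ℝ) ^ s * t ^ s :=
    Real.mul_rpow (by norm_num) ht0.le
  have h4 : (3/2 : ℝ) ^ s ≤ (3/2 : ℝ) ^ (1:ℝ) :=
    Real.rpow_le_rpow_of_exponent_le (by norm_num) hs1
  rw [Real.rpow_one] at h4
  have hts : 0 ≤ t ^ s := Real.rpow_nonneg ht0.le s
  nlinarith [h2, h3, h4]
end

section
/- Let r ∈ (0, 1/3]. For every x ∈ f_1(S_r) and every d with 1−2r ≤ d ≤ (1−2r)/r, one has B((0,0), d) ∩ S_r ⊆ B(x, d) ∩ S_r, where B denotes the closed Euclidean ball in ℝ²; consequently μ(B((0,0),d)) ≤ μ(B(x,d)) for every Borel probability measure μ supported on S_r. -/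
open Metric Set MeasureTheory Filter Topology
open scoped ENNReal NNReal

set_option maxHeartbeats 1000000 in
private lemma cone_dot (s a b c d : ℝ) (hs : s^2 = 3) (hs0 : 0 ≤ s)
    (hb0 : 0 ≤ b) (hb : b ≤ s*a) (hd0 : 0 ≤ d) (hd : d ≤ s*c) :
    Real.sqrt (a^2+b^2) * Real.sqrt (c^2+d^2) ≤ 2*(a*c+b*d) := by
  have ha : 0 ≤ a := by nlinarith
  have hc : 0 ≤ c := by nlinarith
  have hdot : 0 ≤ a*c+b*d := by positivity
  rw [← Real.sqrt_mul (by positivity)]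
  rw [show (2*(a*c+b*d)) = Real.sqrt ((2*(a*c+b*d))^2) from (Real.sqrt_sq (by positivity)).symm]
  apply Real.sqrt_le_sqrt
  have h2 : a*d - b*c ≤ s*(a*c) := by nlinarith [mul_nonneg hb0 hc, mul_le_mul_of_nonneg_left hd ha]
  have h3 : -(s*(a*c)) ≤ a*d - b*c := by nlinarith [mul_nonneg ha hd0, mul_le_mul_of_nonneg_right hb hc]
  have h4 : (a*d-b*c)^2 ≤ (s*(a*c))^2 := sq_le_sq' h3 h2
  have h5 : (a*c)^2 ≤ (a*c+b*d)^2 := by nlinarith [mul_nonneg ha hc, mul_nonneg hb0 hd0]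
  nlinarith [h4, h5]

set_option maxHeartbeats 1000000 in
private lemma normE (v : EuclideanSpace ℝ (Fin 2)) : ‖v‖ = Real.sqrt ((v 0)^2 + (v 1)^2) := by
  rw [EuclideanSpace.norm_eq]
  simp [Fin.sum_univ_two, sq]


set_option maxHeartbeats 1000000 in
theorem ball_at_origin_minimizes_mass
(r : ℝ) (hr0 : 0 < r) (hr : r ≤ 1/3)
    (S : Set (EuclideanSpace ℝ (Fin 2))) (hSne : S.Nonempty) (hScp : IsCompact S)
    (hinv : S = (fun v => r • v) '' S ∪
        (fun v => r • v + (WithLp.equiv 2 (Fin 2 → ℝ)).symm ![1 - r, 0]) '' S ∪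
        (fun v => r • v +
          (1 - r) • (WithLp.equiv 2 (Fin 2 → ℝ)).symm ![1/2, Real.sqrt 3 / 2]) '' S)
    (x : EuclideanSpace ℝ (Fin 2)) (hx : x ∈ (fun v => r • v) '' S)
    (d : ℝ) (hd1 : 1 - 2 * r ≤ d) (hd2 : d ≤ (1 - 2 * r) / r) :
    Metric.closedBall (0 : EuclideanSpace ℝ (Fin 2)) d ∩ S ⊆ Metric.closedBall x d ∩ S ∧
    ∀ μ : MeasureTheory.Measure (EuclideanSpace ℝ (Fin 2)),
      IsProbabilityMeasure μ → μ Sᶜ = 0 →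
      μ (Metric.closedBall (0 : EuclideanSpace ℝ (Fin 2)) d) ≤ μ (Metric.closedBall x d) := by
  have hs3 : (Real.sqrt 3)^2 = 3 := Real.sq_sqrt (by norm_num)
  have hs30 : 0 ≤ Real.sqrt 3 := Real.sqrt_nonneg 3
  set e2 : EuclideanSpace ℝ (Fin 2) := (WithLp.equiv 2 (Fin 2 → ℝ)).symm ![1 - r, 0] with he2
  set e3 : EuclideanSpace ℝ (Fin 2) :=
    (1 - r) • (WithLp.equiv 2 (Fin 2 → ℝ)).symm ![1/2, Real.sqrt 3 / 2] with he3
  have he20 : e2 0 = 1 - r := by simp [he2]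
  have he21 : e2 1 = 0 := by simp [he2]
  have he30 : e3 0 = (1 - r) * (1/2) := by simp [he3]
  have he31 : e3 1 = (1 - r) * (Real.sqrt 3 / 2) := by simp [he3]
  have hne2 : ‖e2‖ = 1 - r := by
    rw [normE, he20, he21]
    rw [show (1-r)^2 + 0^2 = (1-r)^2 by ring, Real.sqrt_sq (by linarith)]
  have hne3 : ‖e3‖ = 1 - r := by
    rw [normE, he30, he31]
    rw [show ((1-r)*(1/2))^2 + ((1-r)*(Real.sqrt 3/2))^2 = (1-r)^2 by nlinarith [hs3],
      Real.sqrt_sq (by linarith)]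
  have hne23 : ‖e2 - e3‖ = 1 - r := by
    rw [normE]
    have h0 : (e2 - e3) 0 = (1-r) * (1/2) := by
      simp only [PiLp.sub_apply, he20, he30]; ring
    have h1 : (e2 - e3) 1 = -((1-r) * (Real.sqrt 3/2)) := by
      simp only [PiLp.sub_apply, he21, he31]; ring
    rw [h0, h1]
    rw [show ((1-r)*(1/2))^2 + (-((1-r)*(Real.sqrt 3/2)))^2 = (1-r)^2 by nlinarith [hs3],
      Real.sqrt_sq (by linarith)]
  -- norm bound on S
  have hnormS : ∀ v ∈ S, ‖v‖ ≤ 1 := by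
    obtain ⟨v₀, hv₀S, hmax⟩ := hScp.exists_isMaxOn hSne continuous_norm.continuousOn
    have hmax' : ∀ v ∈ S, ‖v‖ ≤ ‖v₀‖ := fun v hv => isMaxOn_iff.mp hmax v hv
    suffices h : ‖v₀‖ ≤ 1 by intro v hv; exact le_trans (hmax' v hv) h
    have hv₀' := hv₀S
    rw [hinv] at hv₀'
    have key : ∀ (t : EuclideanSpace ℝ (Fin 2)) (w : EuclideanSpace ℝ (Fin 2)),
        w ∈ S → ‖t‖ ≤ 1 - r → v₀ = r • w + t → ‖v₀‖ ≤ 1 := by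
      intro t w hw ht hv
      have h1 : ‖v₀‖ ≤ r * ‖w‖ + ‖t‖ := by
        rw [hv]
        refine le_trans (norm_add_le _ _) ?_
        rw [norm_smul, Real.norm_eq_abs, abs_of_pos hr0]
      have h2 := hmax' w hw
      nlinarith
    rcases hv₀' with (⟨w, hw, hww⟩ | ⟨w, hw, hww⟩) | ⟨w, hw, hww⟩
    · exact key 0 w hw (by simp; linarith) (by rw [← hww]; simp)
    · exact key e2 w hw (le_of_eq hne2) hww.symm
    · exact key e3 w hw (le_of_eq hne3) hww.symm
  -- diameter bound
  have hdiamS : ∀ u ∈ S, ∀ v ∈ S, dist u v ≤ 1 := by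
    obtain ⟨p₀, hp₀S, hmax⟩ := (hScp.prod hScp).exists_isMaxOn (hSne.prod hSne)
      (continuous_fst.dist continuous_snd).continuousOn
    have hmax' : ∀ u ∈ S, ∀ v ∈ S, dist u v ≤ dist p₀.1 p₀.2 := fun u hu v hv =>
      isMaxOn_iff.mp hmax (u, v) ⟨hu, hv⟩
    suffices h : dist p₀.1 p₀.2 ≤ 1 by
      intro u hu v hv; exact le_trans (hmax' u hu v hv) h
    have hp1 : p₀.1 ∈ S := hp₀S.1
    have hp2 : p₀.2 ∈ S := hp₀S.2
    rw [hinv] at hp1 hp2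
    have key : ∀ (t t' : EuclideanSpace ℝ (Fin 2)) (a b : EuclideanSpace ℝ (Fin 2)),
        a ∈ S → b ∈ S → ‖t - t'‖ ≤ 1 - r → p₀.1 = r • a + t → p₀.2 = r • b + t' →
        dist p₀.1 p₀.2 ≤ 1 := by
      intro t t' a b ha hb htt h1 h2
      have h3 : dist p₀.1 p₀.2 ≤ r * dist a b + ‖t - t'‖ := by
        rw [h1, h2, dist_eq_norm]
        have : r • a + t - (r • b + t') = r • (a - b) + (t - t') := by
          rw [smul_sub]; abel
        rw [this]
        refine le_trans (norm_add_le _ _) ?_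
        rw [norm_smul, Real.norm_eq_abs, abs_of_pos hr0, ← dist_eq_norm]
      have h4 := hmax' a ha b hb
      nlinarith
    have hz : ∀ w : EuclideanSpace ℝ (Fin 2), r • w = r • w + 0 := by intro w; simp
    rcases hp1 with (⟨a, ha, haa⟩ | ⟨a, ha, haa⟩) | ⟨a, ha, haa⟩ <;>
      rcases hp2 with (⟨b, hb, hbb⟩ | ⟨b, hb, hbb⟩) | ⟨b, hb, hbb⟩
    · exact key 0 0 a b ha hb (by simp; linarith) (by rw [← haa]; simp) (by rw [← hbb]; simp)
    · exact key 0 e2 a b ha hb (by rw [zero_sub, norm_neg, hne2]) (by rw [← haa]; simp) hbb.symm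
    · exact key 0 e3 a b ha hb (by rw [zero_sub, norm_neg, hne3]) (by rw [← haa]; simp) hbb.symm
    · exact key e2 0 a b ha hb (by rw [sub_zero, hne2]) haa.symm (by rw [← hbb]; simp)
    · exact key e2 e2 a b ha hb (by simp; linarith) haa.symm hbb.symm
    · exact key e2 e3 a b ha hb (le_of_eq hne23) haa.symm hbb.symm
    · exact key e3 0 a b ha hb (by rw [sub_zero, hne3]) haa.symm (by rw [← hbb]; simp)
    · exact key e3 e2 a b ha hb (by rw [← norm_neg, neg_sub, hne23]) haa.symm hbb.symm
    · exact key e3 e3 a b ha hb (by simp; linarith) haa.symm hbb.symm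
  -- cone bounds
  have hcone1 : ∀ v ∈ S, 0 ≤ v 1 := by
    obtain ⟨v₀, hv₀S, hmin⟩ := hScp.exists_isMinOn hSne
      ((EuclideanSpace.proj (1 : Fin 2) :
        EuclideanSpace ℝ (Fin 2) →L[ℝ] ℝ).continuous.continuousOn)
    have hmin' : ∀ v ∈ S, v₀ 1 ≤ v 1 := fun v hv => isMinOn_iff.mp hmin v hv
    suffices h : 0 ≤ v₀ 1 by intro v hv; exact le_trans h (hmin' v hv)
    have hv₀' := hv₀S
    rw [hinv] at hv₀'
    have key : ∀ (t w : EuclideanSpace ℝ (Fin 2)), w ∈ S → 0 ≤ t 1 →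
        v₀ = r • w + t → 0 ≤ v₀ 1 := by
      intro t w hw ht hv
      have h1 : v₀ 1 = r * w 1 + t 1 := by rw [hv]; simp
      have h2 := hmin' w hw
      nlinarith
    rcases hv₀' with (⟨w, hw, hww⟩ | ⟨w, hw, hww⟩) | ⟨w, hw, hww⟩
    · exact key 0 w hw (by simp) (by rw [← hww]; simp)
    · exact key e2 w hw (by rw [he21]) hww.symm
    · exact key e3 w hw (by rw [he31]; nlinarith [mul_nonneg (by linarith : (0:ℝ) ≤ 1 - r) hs30]) hww.symm
  have hcone2 : ∀ v ∈ S, v 1 ≤ Real.sqrt 3 * v 0 := by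
    have hcont : Continuous (fun v : EuclideanSpace ℝ (Fin 2) => Real.sqrt 3 * v 0 - v 1) :=
      (continuous_const.mul (EuclideanSpace.proj (0 : Fin 2) :
          EuclideanSpace ℝ (Fin 2) →L[ℝ] ℝ).continuous).sub
        (EuclideanSpace.proj (1 : Fin 2) :
          EuclideanSpace ℝ (Fin 2) →L[ℝ] ℝ).continuous
    obtain ⟨v₀, hv₀S, hmin⟩ := hScp.exists_isMinOn hSne hcont.continuousOn
    have hmin' : ∀ v ∈ S, Real.sqrt 3 * v₀ 0 - v₀ 1 ≤ Real.sqrt 3 * v 0 - v 1 :=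
      fun v hv => isMinOn_iff.mp hmin v hv
    suffices h : 0 ≤ Real.sqrt 3 * v₀ 0 - v₀ 1 by
      intro v hv; have := le_trans h (hmin' v hv); linarith
    have hv₀' := hv₀S
    rw [hinv] at hv₀'
    have key : ∀ (t w : EuclideanSpace ℝ (Fin 2)), w ∈ S →
        0 ≤ Real.sqrt 3 * t 0 - t 1 → v₀ = r • w + t →
        0 ≤ Real.sqrt 3 * v₀ 0 - v₀ 1 := by
      intro t w hw ht hv
      have h1 : Real.sqrt 3 * v₀ 0 - v₀ 1
          = r * (Real.sqrt 3 * w 0 - w 1) + (Real.sqrt 3 * t 0 - t 1) := by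
        rw [hv]; simp; ring
      have h2 := hmin' w hw
      nlinarith
    rcases hv₀' with (⟨w, hw, hww⟩ | ⟨w, hw, hww⟩) | ⟨w, hw, hww⟩
    · exact key 0 w hw (by simp) (by rw [← hww]; simp)
    · exact key e2 w hw (by rw [he20, he21]; nlinarith) hww.symm
    · exact key e3 w hw (by rw [he30, he31]; nlinarith) hww.symm
  -- main inclusion
  obtain ⟨z, hzS, hzx⟩ := hx
  have hzx' : x = r • z := hzx.symm
  clear hzx
  have hd0 : 0 ≤ d := by linarith
  have hsub : Metric.closedBall (0 : EuclideanSpace ℝ (Fin 2)) d ∩ S ⊆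
      Metric.closedBall x d ∩ S := by
    rintro y ⟨hyb, hyS⟩
    refine ⟨?_, hyS⟩
    rw [mem_closedBall, dist_eq_norm] at hyb ⊢
    rw [sub_zero] at hyb
    have hyS' := hyS
    rw [hinv] at hyS'
    have hzn := hnormS z hzS
    have hzn0 : 0 ≤ ‖z‖ := norm_nonneg z
    have hyn0 : 0 ≤ ‖y‖ := norm_nonneg y
    have far : 1 - 2*r ≤ ‖y‖ → ‖y - x‖ ≤ d := by
      intro hylb
      have hz1 := hcone1 z hzS
      have hz2 := hcone2 z hzS
      have hy1 := hcone1 y hyS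
      have hy2 := hcone2 y hyS
      have hdot : ‖z‖ * ‖y‖ ≤ 2 * (z 0 * y 0 + z 1 * y 1) := by
        rw [normE z, normE y]
        exact cone_dot (Real.sqrt 3) (z 0) (z 1) (y 0) (y 1) hs3 hs30 hz1
          (by linarith) hy1 (by linarith)
      have hinner : (inner ℝ x y : ℝ) = r * (z 0 * y 0 + z 1 * y 1) := by
        rw [hzx', real_inner_smul_left]
        congr 1
        simp [PiLp.inner_apply, Fin.sum_univ_two, mul_comm]
      have hxn : ‖x‖ = r * ‖z‖ := by
        rw [hzx', norm_smul, Real.norm_eq_abs, abs_of_pos hr0]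
      have hsq : ‖y - x‖^2 ≤ d^2 := by
        have hexp : ‖y - x‖^2 = ‖y‖^2 - 2*(inner ℝ y x : ℝ) + ‖x‖^2 := norm_sub_sq_real y x
        rw [real_inner_comm, hinner] at hexp
        have e1 : r * (‖z‖ * ‖y‖) ≤ r * (2 * (z 0 * y 0 + z 1 * y 1)) :=
          mul_le_mul_of_nonneg_left hdot (le_of_lt hr0)
        have e2' : r * ‖z‖ * (1 - 2*r) ≤ r * (‖z‖ * ‖y‖) := by
          have h0 : 0 ≤ r * ‖z‖ := by positivity
          nlinarith
        have e3' : (r * ‖z‖)^2 ≤ r * ‖z‖ * (1 - 2*r) := by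
          have h5 : r * ‖z‖ ≤ 1 - 2*r := by nlinarith
          nlinarith [mul_nonneg (le_of_lt hr0) hzn0]
        rw [hexp, hxn]
        nlinarith
      nlinarith [norm_nonneg (y - x), hsq]
    have lower : ∀ (t wv : EuclideanSpace ℝ (Fin 2)), wv ∈ S → ‖t‖ = 1 - r →
        y = r • wv + t → 1 - 2*r ≤ ‖y‖ := by
      intro t wv hwv ht hy
      have h3 : ‖r • wv‖ ≤ r := by
        rw [norm_smul, Real.norm_eq_abs, abs_of_pos hr0]
        nlinarith [hnormS wv hwv]
      have h2 : ‖t‖ ≤ ‖r • wv + t‖ + ‖r • wv‖ := by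
        calc ‖t‖ = ‖(r • wv + t) - (r • wv)‖ := by rw [add_sub_cancel_left]
          _ ≤ ‖r • wv + t‖ + ‖r • wv‖ := norm_sub_le _ _
      rw [hy]; rw [ht] at h2; linarith
    rcases hyS' with (⟨w, hw, hww⟩ | ⟨w, hw, hww⟩) | ⟨w, hw, hww⟩
    · have hww' : y = r • w := hww.symm
      clear hww hinv
      have hyx : y - x = r • (w - z) := by rw [hww', hzx', smul_sub]
      rw [hyx, norm_smul, Real.norm_eq_abs, abs_of_pos hr0]
      have h1 : ‖w - z‖ ≤ 1 := by rw [← dist_eq_norm]; exact hdiamS w hw z hzS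
      nlinarith
    · have hww' : y = r • w + e2 := hww.symm
      clear hww hinv
      exact far (lower e2 w hw hne2 hww')
    · have hww' : y = r • w + e3 := hww.symm
      clear hww hinv
      exact far (lower e3 w hw hne3 hww')
  refine ⟨hsub, ?_⟩
  intro μ _ hμc
  calc μ (Metric.closedBall (0 : EuclideanSpace ℝ (Fin 2)) d)
      ≤ μ (Metric.closedBall (0 : EuclideanSpace ℝ (Fin 2)) d ∩ S)
        + μ (Metric.closedBall (0 : EuclideanSpace ℝ (Fin 2)) d \ S) :=
        measure_le_inter_add_diff μ _ S
    _ = μ (Metric.closedBall (0 : EuclideanSpace ℝ (Fin 2)) d ∩ S) := by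
        rw [measure_mono_null (diff_subset_compl _ _) hμc, add_zero]
    _ ≤ μ (Metric.closedBall x d) :=
        measure_mono (hsub.trans inter_subset_left)
end

section
/- Let r ∈ (0, 1/3]. For every i ∈ {2, 3}, every y ∈ f_i(S_r) and every x ∈ f_1(S_r), one has dist(x, y) ≤ dist((0,0), y); that is, the maximum over x ∈ f_1(S_r) of dist(x, y) is attained at x = (0,0). -/
open Metric Set MeasureTheory Filter Topology
open scoped ENNReal NNReal

lemma key_subset (r : ℝ) (hr0 : 0 < r) (hr1 : r < 1)
    (S K : Set (EuclideanSpace ℝ (Fin 2))) (hSne : S.Nonempty) (hScp : IsCompact S)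
    (hK : IsClosed K) (hKne : K.Nonempty)
    (c : Fin 3 → EuclideanSpace ℝ (Fin 2))
    (hmap : ∀ i, ∀ v ∈ K, r • v + c i ∈ K)
    (hinv : ∀ x ∈ S, ∃ i v, v ∈ S ∧ x = r • v + c i) :
    S ⊆ K := by
  obtain ⟨x₀, hx₀S, hmax⟩ := hScp.exists_isMaxOn hSne
    ((continuous_infDist_pt K).continuousOn)
  set M := infDist x₀ K with hM
  have hM0 : M ≤ 0 := by
    obtain ⟨i, v, hvS, hx₀⟩ := hinv x₀ hx₀S
    obtain ⟨h, hhK, hdist⟩ := hK.exists_infDist_eq_dist hKne v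
    have h1 : infDist x₀ K ≤ dist x₀ (r • h + c i) := infDist_le_dist_of_mem (hmap i h hhK)
    have h2 : dist x₀ (r • h + c i) = r * dist v h := by
      rw [hx₀, dist_eq_norm]
      have : r • v + c i - (r • h + c i) = r • (v - h) := by module
      rw [this, norm_smul, Real.norm_eq_abs, abs_of_pos hr0, dist_eq_norm]
    have h3 : infDist v K ≤ M := hmax hvS
    nlinarith [infDist_nonneg (x := v) (s := K), h1, h2, hdist]
  intro x hxS
  have h5 : infDist x K = 0 := le_antisymm ((hmax hxS).trans hM0) infDist_nonneg
  exact (hK.mem_iff_infDist_zero hKne).mpr h5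

set_option maxHeartbeats 2000000 in
theorem dist_to_other_pieces_maximized_at_origin
(r : ℝ) (hr0 : 0 < r) (hr : r ≤ 1/3)
    (S : Set (EuclideanSpace ℝ (Fin 2))) (hSne : S.Nonempty) (hScp : IsCompact S)
    (hinv : S = (fun v => r • v) '' S ∪
        (fun v => r • v + (WithLp.equiv 2 (Fin 2 → ℝ)).symm ![1 - r, 0]) '' S ∪
        (fun v => r • v +
          (1 - r) • (WithLp.equiv 2 (Fin 2 → ℝ)).symm ![1/2, Real.sqrt 3 / 2]) '' S)
    :
    ∀ y : EuclideanSpace ℝ (Fin 2),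
      (y ∈ (fun v => r • v + (WithLp.equiv 2 (Fin 2 → ℝ)).symm ![1 - r, 0]) '' S ∨
       y ∈ (fun v => r • v +
          (1 - r) • (WithLp.equiv 2 (Fin 2 → ℝ)).symm ![1/2, Real.sqrt 3 / 2]) '' S) →
      ∀ x ∈ (fun v => r • v) '' S,
        dist x y ≤ dist (0 : EuclideanSpace ℝ (Fin 2)) y := by
  have hr1 : r < 1 := by linarith
  have s3 : Real.sqrt 3 ^ 2 = 3 := Real.sq_sqrt (by norm_num)
  have s3nn : (0:ℝ) ≤ Real.sqrt 3 := Real.sqrt_nonneg 3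
  have s3ge1 : (1:ℝ) ≤ Real.sqrt 3 := by nlinarith
  set c2 : EuclideanSpace ℝ (Fin 2) := (WithLp.equiv 2 (Fin 2 → ℝ)).symm ![1 - r, 0] with hc2
  set c3 : EuclideanSpace ℝ (Fin 2) :=
    (1 - r) • (WithLp.equiv 2 (Fin 2 → ℝ)).symm ![1/2, Real.sqrt 3 / 2] with hc3
  have hc20 : c2 0 = 1 - r := by simp [hc2]
  have hc21 : c2 1 = 0 := by simp [hc2]
  have hc30 : c3 0 = (1 - r) * (1/2) := by simp [hc3]
  have hc31 : c3 1 = (1 - r) * (Real.sqrt 3 / 2) := by simp [hc3]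
  have hnorm : ∀ x : EuclideanSpace ℝ (Fin 2), ‖x‖ = Real.sqrt ((x 0)^2 + (x 1)^2) := by
    intro x; simp [EuclideanSpace.norm_eq, Fin.sum_univ_two, sq_abs]
  have hnc2 : ‖c2‖ = 1 - r := by
    rw [hnorm, hc20, hc21]
    rw [show (1-r)^2 + 0^2 = (1-r)^2 by ring, Real.sqrt_sq (by linarith)]
  have hnc3 : ‖c3‖ = 1 - r := by
    rw [hnorm, hc30, hc31]
    rw [show ((1-r)*(1/2))^2 + ((1-r)*(Real.sqrt 3/2))^2 = (1-r)^2 by nlinarith [s3],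
      Real.sqrt_sq (by linarith)]
  set K : Set (EuclideanSpace ℝ (Fin 2)) :=
    {v | 0 ≤ v 1 ∧ v 1 ≤ Real.sqrt 3 * v 0 ∧ ‖v‖ ≤ 1} with hKdef
  have hKclosed : IsClosed K := by
    have hcont : ∀ i : Fin 2, Continuous fun v : EuclideanSpace ℝ (Fin 2) => v i :=
      fun i => (EuclideanSpace.proj (𝕜 := ℝ) i).continuous
    rw [hKdef, Set.setOf_and, Set.setOf_and]
    exact (isClosed_le continuous_const (hcont 1)).inter
      ((isClosed_le (hcont 1) (continuous_const.mul (hcont 0))).inter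
       (isClosed_le continuous_norm continuous_const))
  have hKne : K.Nonempty := ⟨0, by simp [hKdef]⟩
  set c : Fin 3 → EuclideanSpace ℝ (Fin 2) := ![0, c2, c3] with hc
  have hmem0 : ∀ v ∈ K, r • v ∈ K := by
    intro v ⟨hv1, hv12, hvn⟩
    refine ⟨?_, ?_, ?_⟩
    · simp only [PiLp.smul_apply, smul_eq_mul]; positivity
    · simp only [PiLp.smul_apply, smul_eq_mul]; nlinarith
    · rw [norm_smul, Real.norm_eq_abs, abs_of_pos hr0]; nlinarith [norm_nonneg v]
  have htri : ∀ v ∈ K, ∀ w : EuclideanSpace ℝ (Fin 2), ‖r • v + w‖ ≤ r + ‖w‖ := by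
    intro v ⟨_, _, hvn⟩ w
    calc ‖r • v + w‖ ≤ ‖r • v‖ + ‖w‖ := norm_add_le _ _
      _ ≤ r + ‖w‖ := by
        rw [norm_smul, Real.norm_eq_abs, abs_of_pos hr0]
        nlinarith [norm_nonneg v]
  have hmem2 : ∀ v ∈ K, r • v + c2 ∈ K := by
    intro v hv
    obtain ⟨hv1, hv12, hvn⟩ := hv
    refine ⟨?_, ?_, ?_⟩
    · simp only [PiLp.add_apply, PiLp.smul_apply, smul_eq_mul, hc21]; positivity
    · simp only [PiLp.add_apply, PiLp.smul_apply, smul_eq_mul, hc20, hc21]; nlinarith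
    · have := htri v ⟨hv1, hv12, hvn⟩ c2; rw [hnc2] at this; linarith
  have hmem3 : ∀ v ∈ K, r • v + c3 ∈ K := by
    intro v hv
    obtain ⟨hv1, hv12, hvn⟩ := hv
    refine ⟨?_, ?_, ?_⟩
    · simp only [PiLp.add_apply, PiLp.smul_apply, smul_eq_mul, hc31]; nlinarith
    · simp only [PiLp.add_apply, PiLp.smul_apply, smul_eq_mul, hc30, hc31]; nlinarith
    · have := htri v ⟨hv1, hv12, hvn⟩ c3; rw [hnc3] at this; linarith
  have hmap : ∀ i, ∀ v ∈ K, r • v + c i ∈ K := by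
    intro i v hv
    match i with
    | 0 => rw [show c 0 = 0 from rfl, add_zero]; exact hmem0 v hv
    | 1 => rw [show c 1 = c2 from rfl]; exact hmem2 v hv
    | 2 => rw [show c 2 = c3 from rfl]; exact hmem3 v hv
  have hSK : S ⊆ K := by
    refine key_subset r hr0 hr1 S K hSne hScp hKclosed hKne c hmap ?_
    intro x hx
    rw [hinv] at hx
    rcases hx with (⟨v, hv, hxv⟩ | ⟨v, hv, hxv⟩) | ⟨v, hv, hxv⟩
    · exact ⟨0, v, hv, by rw [← hxv, show c 0 = 0 from rfl, add_zero]⟩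
    · exact ⟨1, v, hv, hxv.symm⟩
    · exact ⟨2, v, hv, hxv.symm⟩
  -- main part
  intro y hy x hx
  obtain ⟨v, hvS, hxv⟩ := hx
  obtain ⟨hv1, hv12, hvn⟩ := hSK hvS
  have hv0 : 0 ≤ v 0 := by nlinarith
  have hvsq : v 0 ^ 2 + v 1 ^ 2 ≤ 1 := by
    rw [hnorm] at hvn
    nlinarith [Real.sq_sqrt (show (0:ℝ) ≤ v 0 ^2 + v 1 ^2 by positivity),
      Real.sqrt_nonneg (v 0 ^2 + v 1 ^2)]
  have hv0le : v 0 ≤ 1 := by nlinarith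
  have hv1le : v 1 ≤ 1 := by nlinarith
  have h13 : v 1 ^ 2 ≤ 3 * v 0 ^ 2 := by
    nlinarith [mul_self_le_mul_self hv1 hv12, s3]
  have hx0 : x 0 = r * v 0 := by rw [← hxv]; simp
  have hx1 : x 1 = r * v 1 := by rw [← hxv]; simp
  have hdisteq : ∀ a b : EuclideanSpace ℝ (Fin 2),
      dist a b = Real.sqrt ((a 0 - b 0)^2 + (a 1 - b 1)^2) := by
    intro a b; simp [EuclideanSpace.dist_eq, Fin.sum_univ_two, Real.dist_eq, sq_abs]
  rw [hdisteq, hdisteq]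
  apply Real.sqrt_le_sqrt
  have h00 : (0 : EuclideanSpace ℝ (Fin 2)) 0 = 0 := rfl
  have h01 : (0 : EuclideanSpace ℝ (Fin 2)) 1 = 0 := rfl
  rw [h00, h01, hx0, hx1]
  rcases hy with ⟨w, hwS, hyw⟩ | ⟨w, hwS, hyw⟩
  · obtain ⟨hw1, hw12, hwn⟩ := hSK hwS
    have hw0 : 0 ≤ w 0 := by nlinarith
    have hy0 : 1 - r ≤ y 0 := by
      rw [← hyw]; simp only [PiLp.add_apply, PiLp.smul_apply, smul_eq_mul, hc20]; nlinarith
    have hy1 : 0 ≤ y 1 := by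
      rw [← hyw]; simp only [PiLp.add_apply, PiLp.smul_apply, smul_eq_mul, hc21]; nlinarith
    have C : v 0 ^ 2 ≤ v 0 := by nlinarith
    nlinarith [mul_le_mul_of_nonneg_left h13 (sq_nonneg r),
      mul_le_mul_of_nonneg_left C (sq_nonneg r),
      mul_nonneg (mul_nonneg hr0.le hv0) (by linarith : (0:ℝ) ≤ 1 - 3*r),
      mul_nonneg (mul_nonneg hr0.le hv0) (sub_nonneg.2 hy0),
      mul_nonneg (mul_nonneg hr0.le hv1) hy1]
  · obtain ⟨hw1, hw12, hwn⟩ := hSK hwS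
    have hw0 : 0 ≤ w 0 := by nlinarith
    have hy0 : (1 - r) * (1/2) ≤ y 0 := by
      rw [← hyw]; simp only [PiLp.add_apply, PiLp.smul_apply, smul_eq_mul, hc30]; nlinarith
    have hy1 : (1 - r) * (Real.sqrt 3 / 2) ≤ y 1 := by
      rw [← hyw]; simp only [PiLp.add_apply, PiLp.smul_apply, smul_eq_mul, hc31]; nlinarith
    have C0 : v 0 ^ 2 ≤ v 0 := by nlinarith
    have C1 : v 1 ^ 2 ≤ v 1 := by nlinarith
    nlinarith [mul_le_mul_of_nonneg_left C0 (sq_nonneg r),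
      mul_le_mul_of_nonneg_left C1 (sq_nonneg r),
      mul_nonneg (mul_nonneg hr0.le hv0) (sub_nonneg.2 hy0),
      mul_nonneg (mul_nonneg hr0.le hv1) (sub_nonneg.2 hy1),
      mul_nonneg (mul_nonneg (mul_nonneg hr0.le hv1) (sub_nonneg.2 s3ge1))
        (by linarith : (0:ℝ) ≤ 1 - r),
      mul_nonneg (mul_nonneg hr0.le hv0) (by linarith : (0:ℝ) ≤ 1 - 2*r),
      mul_nonneg (mul_nonneg hr0.le hv1) (by linarith : (0:ℝ) ≤ 1 - 2*r)]
end
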